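/- Let G = [[G₁₁, G₁₂],[G₁₂ᵀ, G₂₂]] be an invertible symmetric block matrix with G₂₂ symmetric negative definite. Let D = [A B], let α ⊆ {1,…,m} be an index set such that B_α has full row rank and such that N_α := D_αᵀ has N_αᵀG⁻¹N_α invertible, let H_α = G⁻¹ − G⁻¹N_α(N_αᵀG⁻¹N_α)⁻¹N_αᵀG⁻¹, and assume Γ_α = G₁₁ − [G₁₂ A_αᵀ]·[[G₂₂, B_αᵀ],[B_α, 0]]⁻¹·[G₁₂ᵀ; A_α] is positive definite. Let p ∈ {1,…,m} and n_p = D_pᵀ = (A_pᵀ, B_pᵀ). Then: (a) if n_p is a linear combination of the columns of N_α, then n_pᵀH_α n_p = 0; (b) if the row B_p is a linear combination of the rows of B_α, then n_pᵀH_α n_p ≥ 0. -/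

import Mathlib

open Matrix

/-- Two sufficient conditions for `n_pᵀ H_α n_p` to be (non-)negative: if `n_p` lies in
the column span of `N_α` then the value is zero; if the row `B_p` lies in the row span
of `B_α` then the value is nonnegative. -/
theorem stmt_11 {nx ny q : ℕ}
    (G11 : Matrix (Fin nx) (Fin nx) ℝ) (G12 : Matrix (Fin nx) (Fin ny) ℝ)
    (G22 : Matrix (Fin ny) (Fin ny) ℝ)
    (hG11 : G11.IsSymm) (hG22 : G22.IsSymm) (hG22nd : (-G22).PosDef)
    (G : Matrix (Fin nx ⊕ Fin ny) (Fin nx ⊕ Fin ny) ℝ)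
    (hG : G = Matrix.fromBlocks G11 G12 G12ᵀ G22)
    (hGinv : IsUnit G.det)
    (Aα : Matrix (Fin q) (Fin nx) ℝ) (Bα : Matrix (Fin q) (Fin ny) ℝ)
    (hBα : LinearIndependent ℝ (fun i : Fin q => Bα i))
    (Nα : Matrix (Fin nx ⊕ Fin ny) (Fin q) ℝ)
    (hNα : Nα = (Matrix.fromCols Aα Bα)ᵀ)
    (hNGN : IsUnit (Nαᵀ * G⁻¹ * Nα).det)
    (Hα : Matrix (Fin nx ⊕ Fin ny) (Fin nx ⊕ Fin ny) ℝ)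
    (hHα : Hα = G⁻¹ - G⁻¹ * Nα * (Nαᵀ * G⁻¹ * Nα)⁻¹ * Nαᵀ * G⁻¹)
    (Γα : Matrix (Fin nx) (Fin nx) ℝ)
    (hΓα : Γα = G11 - Matrix.fromCols G12 Aαᵀ *
      (Matrix.fromBlocks G22 Bαᵀ Bα 0)⁻¹ * Matrix.fromRows G12ᵀ Aα)
    (hΓpd : Γα.PosDef)
    (Ap : Fin nx → ℝ) (Bp : Fin ny → ℝ)
    (np : Fin nx ⊕ Fin ny → ℝ) (hnp : np = Sum.elim Ap Bp) :
    ((∃ β : Fin q → ℝ, np = Nα *ᵥ β) → np ⬝ᵥ Hα *ᵥ np = 0) ∧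
    ((∃ β : Fin q → ℝ, Bp = Bαᵀ *ᵥ β) → 0 ≤ np ⬝ᵥ Hα *ᵥ np) := by
  have hSinv : (Nαᵀ * G⁻¹ * Nα)⁻¹ * (Nαᵀ * G⁻¹ * Nα) = 1 :=
    Matrix.nonsing_inv_mul _ hNGN
  have hSinv' : (Nαᵀ * G⁻¹ * Nα) * (Nαᵀ * G⁻¹ * Nα)⁻¹ = 1 :=
    Matrix.mul_nonsing_inv _ hNGN
  -- key identity 1 : Hα * Nα = 0
  have key1 : Hα * Nα = 0 := by
    rw [hHα, Matrix.sub_mul]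
    have h : G⁻¹ * Nα * (Nαᵀ * G⁻¹ * Nα)⁻¹ * Nαᵀ * G⁻¹ * Nα
        = G⁻¹ * Nα * ((Nαᵀ * G⁻¹ * Nα)⁻¹ * (Nαᵀ * G⁻¹ * Nα)) := by
      simp only [Matrix.mul_assoc]
    rw [h, hSinv, Matrix.mul_one, sub_self]
  -- key identity 2 : Nαᵀ * Hα = 0
  have key2 : Nαᵀ * Hα = 0 := by
    rw [hHα, Matrix.mul_sub]
    have h : Nαᵀ * (G⁻¹ * Nα * (Nαᵀ * G⁻¹ * Nα)⁻¹ * Nαᵀ * G⁻¹)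
        = ((Nαᵀ * G⁻¹ * Nα) * (Nαᵀ * G⁻¹ * Nα)⁻¹) * (Nαᵀ * G⁻¹) := by
      simp only [Matrix.mul_assoc]
    rw [h, hSinv', Matrix.one_mul, sub_self]
  -- key identity 3 : Hα * G = 1 - G⁻¹Nα S⁻¹ Nαᵀ
  have key3 : Hα * G = 1 - G⁻¹ * Nα * (Nαᵀ * G⁻¹ * Nα)⁻¹ * Nαᵀ := by
    rw [hHα, Matrix.sub_mul, Matrix.nonsing_inv_mul G hGinv]
    congr 1
    have h : G⁻¹ * Nα * (Nαᵀ * G⁻¹ * Nα)⁻¹ * Nαᵀ * G⁻¹ * G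
        = G⁻¹ * Nα * (Nαᵀ * G⁻¹ * Nα)⁻¹ * Nαᵀ * (G⁻¹ * G) := by
      simp only [Matrix.mul_assoc]
    rw [h, Matrix.nonsing_inv_mul G hGinv, Matrix.mul_one]
  constructor
  · rintro ⟨β, hβ⟩
    rw [hβ, Matrix.mulVec_mulVec, key1]
    simp
  · rintro ⟨β, hβ⟩
    -- decompose np = v + Nα β where v = (u, 0)
    set u : Fin nx → ℝ := Ap - Aαᵀ *ᵥ β with hu
    set v : Fin nx ⊕ Fin ny → ℝ := Sum.elim u 0 with hv
    have hNαmul : ∀ x : Fin q → ℝ, Nα *ᵥ x = Sum.elim (Aαᵀ *ᵥ x) (Bαᵀ *ᵥ x) := by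
      intro x
      rw [hNα, Matrix.transpose_fromCols, Matrix.fromRows_mulVec]
    have hdecomp : np = v + Nα *ᵥ β := by
      rw [hNαmul, hnp, hv, hu]
      funext i
      cases i with
      | inl i => simp
      | inr i => simp [hβ]
    -- reduce to v ⬝ Hα v
    have hred : np ⬝ᵥ Hα *ᵥ np = v ⬝ᵥ Hα *ᵥ v := by
      rw [hdecomp, Matrix.mulVec_add, Matrix.mulVec_mulVec, key1]
      simp only [Matrix.zero_mulVec, add_zero, add_dotProduct]
      have h : (Nα *ᵥ β) ⬝ᵥ (Hα *ᵥ v) = 0 := by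
        rw [dotProduct_comm, Matrix.dotProduct_mulVec, ← Matrix.mulVec_transpose,
          Matrix.mulVec_mulVec, key2]
        simp
      rw [h, add_zero]
    rw [hred]
    -- G22 is invertible
    have hG22det : IsUnit G22.det := by
      have h1 : (0 : ℝ) < (-G22).det := hG22nd.det_pos
      have h2 : (-G22).det = (-1) ^ Fintype.card (Fin ny) * G22.det :=
        Matrix.det_neg G22
      refine isUnit_iff_ne_zero.mpr fun h0 => ?_
      rw [h2, h0, mul_zero] at h1
      exact lt_irrefl _ h1
    haveI := G22.invertibleOfIsUnitDet hG22det
    have hnegInv : (-G22)⁻¹ = -(G22⁻¹) := by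
      apply Matrix.inv_eq_right_inv
      rw [Matrix.neg_mul, Matrix.mul_neg, neg_neg, Matrix.mul_nonsing_inv _ hG22det]
    -- Bα (-G22)⁻¹ Bαᵀ is positive definite
    have hBQBpd : (Bα * (-G22)⁻¹ * Bαᵀ).PosDef := by
      have hQ : ((-G22)⁻¹).PosDef := hG22nd.inv
      refine posDef_iff_dotProduct_mulVec.mpr ⟨?_, ?_⟩
      · have h := (hQ.posSemidef.mul_mul_conjTranspose_same Bα).1
        rwa [Matrix.conjTranspose_eq_transpose_of_trivial] at h
      · intro x hx
        have hy : Bαᵀ *ᵥ x ≠ 0 := by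
          intro h0
          apply hx
          have hsum : ∑ i, x i • Bα i = 0 := by
            funext j
            have := congrFun h0 j
            simpa [Matrix.mulVec, dotProduct, mul_comm] using this
          funext i
          exact Fintype.linearIndependent_iff.mp hBα x hsum i
        have h := hQ.dotProduct_mulVec_pos hy
        have heq : star x ⬝ᵥ ((Bα * (-G22)⁻¹ * Bαᵀ) *ᵥ x)
            = star (Bαᵀ *ᵥ x) ⬝ᵥ ((-G22)⁻¹ *ᵥ (Bαᵀ *ᵥ x)) := by
          simp only [star_trivial, ← Matrix.mulVec_mulVec]
          rw [Matrix.dotProduct_mulVec, ← Matrix.mulVec_transpose]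
        rw [heq]
        exact h
    -- the bordered matrix M is invertible
    set M : Matrix (Fin ny ⊕ Fin q) (Fin ny ⊕ Fin q) ℝ :=
      Matrix.fromBlocks G22 Bαᵀ Bα 0 with hM
    have hMdet : IsUnit M.det := by
      rw [hM, Matrix.det_fromBlocks₁₁, invOf_eq_nonsing_inv]
      have h : (0 : Matrix (Fin q) (Fin q) ℝ) - Bα * G22⁻¹ * Bαᵀ
          = Bα * (-G22)⁻¹ * Bαᵀ := by
        rw [hnegInv]
        simp [Matrix.mul_neg, Matrix.neg_mul]
      rw [h]
      exact hG22det.mul (isUnit_iff_ne_zero.mpr hBQBpd.det_pos.ne')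
    -- Γα is invertible
    have hΓdet : IsUnit Γα.det := isUnit_iff_ne_zero.mpr hΓpd.det_pos.ne'
    -- construct the explicit solution of the KKT system
    set zx : Fin nx → ℝ := Γα⁻¹ *ᵥ u with hzx
    have hΓzx : Γα *ᵥ zx = u := by
      rw [hzx, Matrix.mulVec_mulVec, Matrix.mul_nonsing_inv _ hΓdet,
        Matrix.one_mulVec]
    set r : Fin ny ⊕ Fin q → ℝ := (Matrix.fromRows G12ᵀ Aα) *ᵥ zx with hr
    set w : Fin ny ⊕ Fin q → ℝ := M⁻¹ *ᵥ r with hw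
    have hMw : M *ᵥ w = r := by
      rw [hw, Matrix.mulVec_mulVec, Matrix.mul_nonsing_inv _ hMdet,
        Matrix.one_mulVec]
    set w1 : Fin ny → ℝ := w ∘ Sum.inl with hw1
    set w2 : Fin q → ℝ := w ∘ Sum.inr with hw2
    -- block equations from M w = r
    have hMw' : Sum.elim (G22 *ᵥ w1 + Bαᵀ *ᵥ w2) (Bα *ᵥ w1 + (0 : Matrix (Fin q) (Fin q) ℝ) *ᵥ w2)
        = Sum.elim (G12ᵀ *ᵥ zx) (Aα *ᵥ zx) := by
      rw [← Matrix.fromBlocks_mulVec, ← Matrix.fromRows_mulVec, ← hM, ← hr]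
      exact hMw
    have R1 : G22 *ᵥ w1 + Bαᵀ *ᵥ w2 = G12ᵀ *ᵥ zx := by
      funext j; exact congrFun hMw' (Sum.inl j)
    have R2 : Bα *ᵥ w1 = Aα *ᵥ zx := by
      funext j
      have := congrFun hMw' (Sum.inr j)
      simpa using this
    -- first block equation from Γα zx = u
    have hPw : (Matrix.fromCols G12 Aαᵀ) *ᵥ w = G12 *ᵥ w1 + Aαᵀ *ᵥ w2 := by
      have : w = Sum.elim w1 w2 := by funext i; cases i <;> rfl
      rw [this, Matrix.fromCols_mulVec_sumElim]
    have hΓu : G11 *ᵥ zx - (G12 *ᵥ w1 + Aαᵀ *ᵥ w2) = u := by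
      rw [← hPw]
      have h : Γα *ᵥ zx = G11 *ᵥ zx - (Matrix.fromCols G12 Aαᵀ) *ᵥ w := by
        rw [hΓα, Matrix.sub_mulVec]
        congr 1
        rw [hw, hr]
        simp only [Matrix.mulVec_mulVec, Matrix.mul_assoc]
      rw [← h, hΓzx]
    -- assemble z and c
    set z : Fin nx ⊕ Fin ny → ℝ := Sum.elim zx (-w1) with hz
    set c : Fin q → ℝ := -w2 with hc
    have E1 : G *ᵥ z + Nα *ᵥ c = v := by
      rw [hG, hz, hc, hNαmul, hv]
      rw [Matrix.fromBlocks_mulVec]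
      funext i
      cases i with
      | inl i =>
        have := congrFun hΓu i
        simp only [Sum.elim_inl, Sum.elim_comp_inl_inr, Pi.add_apply,
          Matrix.mulVec_neg, Pi.neg_apply, Pi.sub_apply] at this ⊢
        have h1 : (Sum.elim zx (-w1) ∘ Sum.inl) = zx := rfl
        have h2 : (Sum.elim zx (-w1) ∘ Sum.inr) = -w1 := rfl
        rw [h1, h2]
        simp only [Matrix.mulVec_neg, Pi.add_apply, Pi.neg_apply] at this ⊢
        linarith
      | inr i =>
        have := congrFun R1 i
        have h1 : (Sum.elim zx (-w1) ∘ Sum.inl) = zx := rfl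
        have h2 : (Sum.elim zx (-w1) ∘ Sum.inr) = -w1 := rfl
        simp only [Sum.elim_inr, Pi.add_apply, h1, h2, Matrix.mulVec_neg,
          Pi.neg_apply, Pi.zero_apply] at this ⊢
        linarith
    have E2 : Nαᵀ *ᵥ z = 0 := by
      have hNt : Nαᵀ = Matrix.fromCols Aα Bα := by
        rw [hNα, Matrix.transpose_transpose]
      rw [hNt, hz, Matrix.fromCols_mulVec_sumElim]
      funext j
      have := congrFun R2 j
      simp only [Matrix.mulVec_neg, Pi.add_apply, Pi.neg_apply, Pi.zero_apply]
      linarith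
    -- Hα v = z
    have hHv : Hα *ᵥ v = z := by
      rw [← E1, Matrix.mulVec_add, Matrix.mulVec_mulVec, Matrix.mulVec_mulVec,
        key1, key3]
      rw [Matrix.sub_mulVec, Matrix.one_mulVec]
      have h : (G⁻¹ * Nα * (Nαᵀ * G⁻¹ * Nα)⁻¹ * Nαᵀ) *ᵥ z
          = (G⁻¹ * Nα * (Nαᵀ * G⁻¹ * Nα)⁻¹) *ᵥ (Nαᵀ *ᵥ z) := by
        rw [Matrix.mulVec_mulVec]
      rw [h, E2]
      simp
    rw [hHv]
    -- conclude
    have hvz : v ⬝ᵥ z = u ⬝ᵥ zx := by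
      rw [hv, hz, sumElim_dotProduct_sumElim]
      simp
    rw [hvz, hzx]
    have h := hΓpd.inv.posSemidef.dotProduct_mulVec_nonneg u
    simpa using h
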